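/- For every comeager set C ⊆ (2^ℕ)^ℕ, E₀^ℕ is Borel reducible to the restriction E₀^ℕ↾C. -/

import Mathlib

/-- Eventual equality on Cantor space `2^ℕ`. -/
def E0 (x y : ℕ → Bool) : Prop := ∃ N, ∀ n ≥ N, x n = y n

/-- `E₀^ℕ` on `(2^ℕ)^ℕ`. -/
def E0N (x y : ℕ → ℕ → Bool) : Prop := ∀ n, E0 (x n) (y n)

namespace E0Naux

abbrev X := ℕ → ℕ → Bool
abbrev T := ℕ → List (Option Bool)

/-- Finitely supported templates. -/
def FinSupp (t : T) : Prop := ∃ K, ∀ k, K ≤ k → t k = []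

/-- The set of points matching all constant slots of a template. -/
def cyl (t : T) : Set X := {z | ∀ k j b, (t k)[j]? = some (some b) → z k j = b}

/-- Rowwise prefix extension. -/
def Pref (t t' : T) : Prop := ∀ k, ∃ u, t' k = t k ++ u

/-- Rowwise prefix extension appending constants only. -/
def ConstExt (t t' : T) : Prop := ∀ k, ∃ u, t' k = t k ++ u ∧ ∀ o ∈ u, o ≠ none

lemma ConstExt.pref {t t' : T} (h : ConstExt t t') : Pref t t' :=
  fun k => ⟨(h k).choose, (h k).choose_spec.1⟩

lemma Pref.refl (t : T) : Pref t t := fun k => ⟨[], by simp⟩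

lemma Pref.trans {t₁ t₂ t₃ : T} (h : Pref t₁ t₂) (h' : Pref t₂ t₃) : Pref t₁ t₃ := by
  intro k
  obtain ⟨u, hu⟩ := h k
  obtain ⟨v, hv⟩ := h' k
  exact ⟨u ++ v, by rw [hv, hu, List.append_assoc]⟩

lemma ConstExt.refl (t : T) : ConstExt t t := fun k => ⟨[], by simp⟩

lemma ConstExt.trans {t₁ t₂ t₃ : T} (h : ConstExt t₁ t₂) (h' : ConstExt t₂ t₃) :
    ConstExt t₁ t₃ := by
  intro k
  obtain ⟨u, hu, hu2⟩ := h k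
  obtain ⟨v, hv, hv2⟩ := h' k
  refine ⟨u ++ v, by rw [hv, hu, List.append_assoc], ?_⟩
  intro o ho
  rcases List.mem_append.mp ho with h | h
  · exact hu2 o h
  · exact hv2 o h

lemma Pref.getElem? {t t' : T} (h : Pref t t') {k j : ℕ} (hj : j < (t k).length) :
    (t' k)[j]? = (t k)[j]? := by
  obtain ⟨u, hu⟩ := h k
  rw [hu, List.getElem?_append, if_pos hj]

lemma Pref.getElem?_of_some {t t' : T} (h : Pref t t') {k j : ℕ} {o : Option Bool}
    (ho : (t k)[j]? = some o) : (t' k)[j]? = some o := by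
  have hj : j < (t k).length := (List.getElem?_eq_some_iff.mp ho).1
  rw [h.getElem? hj, ho]

lemma cyl_anti {t t' : T} (h : Pref t t') : cyl t' ⊆ cyl t := by
  intro z hz k j b hb
  exact hz k j b (h.getElem?_of_some hb)

lemma ConstExt.none_slot {t t' : T} (h : ConstExt t t') {k j : ℕ}
    (hj : (t' k)[j]? = some none) : (t k)[j]? = some none := by
  obtain ⟨u, hu, hu2⟩ := h k
  rw [hu, List.getElem?_append] at hj
  split at hj
  · exact hj
  · exact absurd rfl (hu2 none (List.mem_of_getElem? hj))

/-- The value function filling bit slots with `σ`. -/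
def fill (t : T) (σ : X) (k j : ℕ) : Bool :=
  match (t k)[j]? with
  | some (some b) => b
  | _ => σ k j

lemma fill_const {t : T} {σ : X} {k j : ℕ} {b : Bool} (h : (t k)[j]? = some (some b)) :
    fill t σ k j = b := by unfold fill; rw [h]

lemma fill_none {t : T} {σ : X} {k j : ℕ} (h : (t k)[j]? = some none) :
    fill t σ k j = σ k j := by unfold fill; rw [h]

/-- every open set contains a "rectangle" neighborhood of its points -/
lemma open_rect {U : Set X} (hU : IsOpen U) {y : X} (hy : y ∈ U) :
    ∃ K N : ℕ, ∀ z : X, (∀ k < K, ∀ j < N, z k j = y k j) → z ∈ U := by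
  obtain ⟨I, u, hu, hIu⟩ := isOpen_pi_iff.mp hU y hy
  choose Ik v hv hv2 using fun k (hk : k ∈ I) => isOpen_pi_iff.mp (hu k hk).1 (y k) (hu k hk).2
  refine ⟨I.sup id + 1, I.sup (fun k => if hk : k ∈ I then (Ik k hk).sup id + 1 else 0) + 1, ?_⟩
  intro z hz
  apply hIu
  intro k hkc
  have hk : k ∈ I := hkc
  apply hv2 k hk
  intro j hj
  have hkK : k < I.sup id + 1 := Nat.lt_succ_of_le (Finset.le_sup (f := id) hk)
  have hjN : j < I.sup (fun k => if hk : k ∈ I then (Ik k hk).sup id + 1 else 0) + 1 := by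
    have h1 : (Ik k hk).sup id + 1 ≤
        I.sup (fun k => if hk : k ∈ I then (Ik k hk).sup id + 1 else 0) := by
      have := Finset.le_sup (f := fun k => if hk : k ∈ I then (Ik k hk).sup id + 1 else 0) hk
      simp only [dif_pos hk] at this
      exact this
    have h2 : j < (Ik k hk).sup id + 1 := Nat.lt_succ_of_le (Finset.le_sup (f := id) hj)
    omega
  rw [hz k hkK j hjN]
  exact (hv k hk j hj).2

/-- the cylinder of all points matching `fill t σ` on decided coordinates is open -/
lemma isOpen_V (t : T) (σ : X) (K : ℕ) (hK : ∀ k, K ≤ k → t k = []) :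
    IsOpen {z : X | ∀ k j, j < (t k).length → z k j = fill t σ k j} := by
  have : {z : X | ∀ k j, j < (t k).length → z k j = fill t σ k j}
      = ⋂ k ∈ Finset.range K, ⋂ j ∈ Finset.range (t k).length,
          {z : X | z k j = fill t σ k j} := by
    ext z
    simp only [Set.mem_setOf_eq, Set.mem_iInter, Finset.mem_range]
    constructor
    · intro h k _ j hj; exact h k j hj
    · intro h k j hj
      by_cases hk : k < K
      · exact h k hk j hj
      · rw [hK k (le_of_not_gt hk)] at hj; simp at hj
  rw [this]
  refine isOpen_biInter_finset fun k _ => isOpen_biInter_finset fun j _ => ?_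
  have hc : Continuous fun z : X => z k j := (continuous_apply j).comp (continuous_apply k)
  exact (isOpen_discrete {fill t σ k j}).preimage hc

/-- one step of the density argument: handle a single bit assignment `σ`. -/
lemma stepB (t : T) (K₀ : ℕ) (hfin : ∀ k, K₀ ≤ k → t k = []) {D : Set X}
    (hD : IsOpen D) (hDd : Dense D) (σ : X) :
    ∃ t', ConstExt t t' ∧ (∃ K, ∀ k, K ≤ k → t' k = []) ∧
      ∀ z : X, (∀ k j b, (t' k)[j]? = some (some b) → z k j = b) →
        (∀ k j, (t k)[j]? = some none → z k j = σ k j) → z ∈ D := by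
  have hV : IsOpen {z : X | ∀ k j, j < (t k).length → z k j = fill t σ k j} :=
    isOpen_V t σ K₀ hfin
  have hVne : Set.Nonempty {z : X | ∀ k j, j < (t k).length → z k j = fill t σ k j} :=
    ⟨fill t σ, fun _ _ _ => rfl⟩
  obtain ⟨y, hyV, hyD⟩ := hDd.inter_open_nonempty _ hV hVne
  obtain ⟨K, N, hKN⟩ := open_rect hD hyD
  refine ⟨fun k => if k < K then
      t k ++ ((List.range N).drop (t k).length).map (fun j => some (y k j)) else t k,
    ?_, ⟨max K K₀, ?_⟩, ?_⟩
  · intro k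
    by_cases hk : k < K
    · refine ⟨((List.range N).drop (t k).length).map (fun j => some (y k j)),
        by simp [hk], ?_⟩
      intro o ho
      obtain ⟨j, _, rfl⟩ := List.mem_map.mp ho
      simp
    · exact ⟨[], by simp [hk]⟩
  · intro k hk
    have h1 : ¬ k < K := by omega
    have h2 : t k = [] := hfin k (le_of_max_le_right hk)
    simp [h1, h2]
  · intro z hz1 hz2
    apply hKN
    intro k hk j hj
    by_cases hjl : j < (t k).length
    · have hsome := List.getElem?_eq_getElem hjl
      have hpref : Pref t (fun k => if k < K then
          t k ++ ((List.range N).drop (t k).length).map (fun j => some (y k j)) else t k) := by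
        intro k
        by_cases hk : k < K
        · exact ⟨((List.range N).drop (t k).length).map (fun j => some (y k j)),
            by simp only [if_pos hk]⟩
        · exact ⟨[], by simp [hk]⟩
      match ho : (t k)[j] with
      | some b =>
        rw [ho] at hsome
        rw [hz1 k j b (hpref.getElem?_of_some hsome)]
        exact (fill_const hsome ▸ hyV k j hjl).symm
      | none =>
        rw [ho] at hsome
        rw [hz2 k j hsome]
        exact (fill_none hsome ▸ hyV k j hjl).symm
    · push_neg at hjl
      have hget : (if k < K then
          t k ++ ((List.range N).drop (t k).length).map (fun j => some (y k j)) else t k)[j]?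
          = some (some (y k j)) := by
        rw [if_pos hk, List.getElem?_append_right hjl, List.getElem?_map,
          List.getElem?_drop]
        rw [Nat.add_sub_cancel' hjl, List.getElem?_range hj]
        rfl
      exact hz1 k j (y k j) hget

lemma stepA_list (t : T) (hfin : FinSupp t) {D : Set X} (hD : IsOpen D) (hDd : Dense D)
    (L : List X) :
    ∃ t', ConstExt t t' ∧ FinSupp t' ∧
      ∀ z ∈ cyl t', (∃ σ ∈ L, ∀ k j, (t k)[j]? = some none → z k j = σ k j) → z ∈ D := by
  induction L with
  | nil =>
    refine ⟨t, ConstExt.refl t, hfin, ?_⟩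
    rintro z _ ⟨σ, hσ, _⟩
    simp at hσ
  | cons σ L ih =>
    obtain ⟨t₁, h1, hfin1, hL⟩ := ih
    obtain ⟨K₁, hK₁⟩ := hfin1
    obtain ⟨t₂, h2, hfin2, hσD⟩ := stepB t₁ K₁ hK₁ hD hDd σ
    refine ⟨t₂, h1.trans h2, hfin2, ?_⟩
    rintro z hz ⟨σ', hσ', hagree⟩
    rcases List.mem_cons.mp hσ' with rfl | hmem
    · refine hσD z hz ?_
      intro k j hj
      exact hagree k j (h1.none_slot hj)
    · exact hL z (cyl_anti h2.pref hz) ⟨σ', hmem, hagree⟩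

/-- the density step: any finitely supported template can be extended by constants
so that its cylinder is contained in a given dense open set. -/
lemma stepA (t : T) (hfin : FinSupp t) {D : Set X} (hD : IsOpen D) (hDd : Dense D) :
    ∃ t', ConstExt t t' ∧ FinSupp t' ∧ cyl t' ⊆ D := by
  classical
  obtain ⟨K₀, hK₀⟩ := hfin
  set M := Finset.sup (Finset.range K₀) (fun k => (t k).length) with hM
  set L : List X := (Finset.univ : Finset (Fin K₀ → Fin M → Bool)).toList.map
    (fun F => fun k j => if h : k < K₀ then (if h2 : j < M then F ⟨k, h⟩ ⟨j, h2⟩ else false)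
      else false) with hL
  obtain ⟨t', h1, h2, h3⟩ := stepA_list t ⟨K₀, hK₀⟩ hD hDd L
  refine ⟨t', h1, h2, ?_⟩
  intro z hz
  refine h3 z hz ⟨fun k j => if h : k < K₀ then (if h2 : j < M then z k j else false)
      else false, ?_, ?_⟩
  · rw [hL]
    refine List.mem_map.mpr ⟨fun a b => z a b, ?_, rfl⟩
    simp [Finset.mem_toList]
  · intro k j hj
    have hjl : j < (t k).length := (List.getElem?_eq_some_iff.mp hj).1
    have hk : k < K₀ := by
      by_contra hk
      rw [hK₀ k (le_of_not_gt hk)] at hjl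
      simp at hjl
    have hjM : j < M :=
      lt_of_lt_of_le hjl (Finset.le_sup (f := fun k => (t k).length) (Finset.mem_range.mpr hk))
    simp [hk, hjM]

section Stages
variable (D : ℕ → Set X) (hD : ∀ n, IsOpen (D n)) (hDd : ∀ n, Dense (D n))

noncomputable def mid (t : {t : T // FinSupp t}) {Dn : Set X} (hDn : IsOpen Dn)
    (hDdn : Dense Dn) : T := (stepA t.1 t.2 hDn hDdn).choose

lemma mid_constExt (t : {t : T // FinSupp t}) {Dn : Set X} (hDn : IsOpen Dn)
    (hDdn : Dense Dn) : ConstExt t.1 (mid t hDn hDdn) := (stepA t.1 t.2 hDn hDdn).choose_spec.1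

lemma mid_fin (t : {t : T // FinSupp t}) {Dn : Set X} (hDn : IsOpen Dn)
    (hDdn : Dense Dn) : FinSupp (mid t hDn hDdn) := (stepA t.1 t.2 hDn hDdn).choose_spec.2.1

lemma mid_cyl (t : {t : T // FinSupp t}) {Dn : Set X} (hDn : IsOpen Dn)
    (hDdn : Dense Dn) : cyl (mid t hDn hDdn) ⊆ Dn := (stepA t.1 t.2 hDn hDdn).choose_spec.2.2

noncomputable def nextT (t : {t : T // FinSupp t}) (n : ℕ) {Dn : Set X} (hDn : IsOpen Dn)
    (hDdn : Dense Dn) : {t : T // FinSupp t} :=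
  ⟨fun k => if k ≤ n then mid t hDn hDdn k ++ [none] else mid t hDn hDdn k, by
    obtain ⟨K₁, hK₁⟩ := mid_fin t hDn hDdn
    refine ⟨max K₁ (n+1), fun k hk => ?_⟩
    have h1 : ¬ k ≤ n := by omega
    have h2 : mid t hDn hDdn k = [] := hK₁ k (le_of_max_le_left hk)
    simp [h1, h2]⟩

lemma nextT_pref (t : {t : T // FinSupp t}) (n : ℕ) {Dn : Set X} (hDn : IsOpen Dn)
    (hDdn : Dense Dn) : Pref t.1 (nextT t n hDn hDdn).1 := by
  refine (mid_constExt t hDn hDdn).pref.trans ?_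
  intro k
  by_cases hk : k ≤ n
  · exact ⟨[none], by simp [nextT, hk]⟩
  · exact ⟨[], by simp [nextT, hk]⟩

lemma nextT_cyl (t : {t : T // FinSupp t}) (n : ℕ) {Dn : Set X} (hDn : IsOpen Dn)
    (hDdn : Dense Dn) : cyl (nextT t n hDn hDdn).1 ⊆ Dn := by
  refine subset_trans (cyl_anti ?_) (mid_cyl t hDn hDdn)
  intro k
  by_cases hk : k ≤ n
  · exact ⟨[none], by simp [nextT, hk]⟩
  · exact ⟨[], by simp [nextT, hk]⟩

lemma nextT_none (t : {t : T // FinSupp t}) (n : ℕ) {Dn : Set X} (hDn : IsOpen Dn)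
    (hDdn : Dense Dn) {k : ℕ} (hk : k ≤ n) :
    ∃ j, (t.1 k).length ≤ j ∧ ((nextT t n hDn hDdn).1 k)[j]? = some none := by
  refine ⟨(mid t hDn hDdn k).length, ?_, ?_⟩
  · obtain ⟨u, hu, -⟩ := mid_constExt t hDn hDdn k
    rw [hu]; simp
  · show (if k ≤ n then mid t hDn hDdn k ++ [none] else mid t hDn hDdn k)[_]? = some none
    rw [if_pos hk, List.getElem?_append_right (le_refl _)]
    simp

noncomputable def stages : ℕ → {t : T // FinSupp t}
  | 0 => ⟨fun _ => [], ⟨0, fun _ _ => rfl⟩⟩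
  | n+1 => nextT (stages n) n (hD n) (hDd n)

lemma stages_pref {n m : ℕ} (h : n ≤ m) :
    Pref (stages D hD hDd n).1 (stages D hD hDd m).1 := by
  induction m with
  | zero => cases Nat.le_zero.mp h; exact Pref.refl _
  | succ m ih =>
    rcases Nat.lt_or_ge n (m+1) with h' | h'
    · exact (ih (Nat.lt_succ_iff.mp h')).trans (nextT_pref _ _ _ _)
    · have : n = m + 1 := le_antisymm h h'
      subst this; exact Pref.refl _

lemma stages_cyl (n : ℕ) : cyl (stages D hD hDd (n+1)).1 ⊆ D n := nextT_cyl _ _ _ _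

lemma stages_len (k m : ℕ) : m < ((stages D hD hDd (k+m+1)).1 k).length := by
  induction m with
  | zero =>
    obtain ⟨j, hj1, hj2⟩ := nextT_none (stages D hD hDd k) k (hD k) (hDd k) (le_refl k)
    have := (List.getElem?_eq_some_iff.mp hj2).1
    show 0 < ((nextT (stages D hD hDd k) k (hD k) (hDd k)).1 k).length
    omega
  | succ m ih =>
    have hstep : ((stages D hD hDd (k+m+1)).1 k).length <
        ((stages D hD hDd (k+m+2)).1 k).length := by
      obtain ⟨j, hj1, hj2⟩ := nextT_none (stages D hD hDd (k+m+1)) (k+m+1) (hD (k+m+1))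
        (hDd (k+m+1)) (by omega : k ≤ k+m+1)
      have := (List.getElem?_eq_some_iff.mp hj2).1
      have : j < ((stages D hD hDd (k+m+2)).1 k).length := this
      omega
    have : k + (m+1) + 1 = k + m + 2 := by omega
    rw [this]
    omega

lemma stages_none {n k : ℕ} (hk : k ≤ n) :
    ∃ j, ((stages D hD hDd n).1 k).length ≤ j ∧
      ((stages D hD hDd (n+1)).1 k)[j]? = some none :=
  nextT_none (stages D hD hDd n) n (hD n) (hDd n) hk

/-- the limiting slot value at row `k`, position `j`. -/
noncomputable def slot (k j : ℕ) : Option Bool :=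
  (((stages D hD hDd (k+j+1)).1 k)[j]?).join

lemma slot_eq {n k j : ℕ} (hj : j < ((stages D hD hDd n).1 k).length) :
    ((stages D hD hDd n).1 k)[j]? = some (slot D hD hDd k j) := by
  have hjN : j < ((stages D hD hDd (k+j+1)).1 k).length := stages_len D hD hDd k j
  have hN := List.getElem?_eq_getElem hjN
  have hslot : slot D hD hDd k j = ((stages D hD hDd (k+j+1)).1 k)[j] := by
    unfold slot; rw [hN]; rfl
  rcases le_total n (k+j+1) with h | h
  · have hn := List.getElem?_eq_getElem hj
    have := (stages_pref D hD hDd h).getElem?_of_some hn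
    rw [hN] at this
    rw [hn, hslot]
    exact congrArg _ (Option.some.inj this).symm
  · have := (stages_pref D hD hDd h).getElem?_of_some hN
    rw [this, hslot]

/-- number of bit slots in row `k` before position `j`. -/
noncomputable def idx (k j : ℕ) : ℕ :=
  (List.range j).countP (fun j' => slot D hD hDd k j' == none)

lemma idx_mono {k j j' : ℕ} (h : j ≤ j') : idx D hD hDd k j ≤ idx D hD hDd k j' :=
  ((List.range_sublist.mpr h).countP_le)

lemma idx_le (k j : ℕ) : idx D hD hDd k j ≤ j := by
  have := List.countP_le_length (l := List.range j)
    (p := fun j' => slot D hD hDd k j' == none)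
  unfold idx
  exact List.countP_le_length.trans (le_of_eq List.length_range)

lemma idx_succ (k j : ℕ) : idx D hD hDd k (j+1) =
    idx D hD hDd k j + (if slot D hD hDd k j = none then 1 else 0) := by
  unfold idx
  rw [List.range_succ, List.countP_append]
  by_cases h : slot D hD hDd k j = none <;> simp [List.countP_cons, h]

lemma slot_none_unbounded (k B : ℕ) :
    ∃ j, B ≤ j ∧ slot D hD hDd k j = none := by
  obtain ⟨j, hj1, hj2⟩ := stages_none D hD hDd (by omega : k ≤ k + B + 1)
  refine ⟨j, ?_, ?_⟩
  · have hlen : B < ((stages D hD hDd (k+B+1)).1 k).length := stages_len D hD hDd k B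
    omega
  · have hjlen := (List.getElem?_eq_some_iff.mp hj2).1
    have := slot_eq D hD hDd (n := k+B+1+1) (k := k) (j := j) hjlen
    rw [this] at hj2
    exact (Option.some.inj hj2)

lemma idx_unbounded (k m : ℕ) : ∃ j, m < idx D hD hDd k j := by
  induction m with
  | zero =>
    obtain ⟨j, -, hj⟩ := slot_none_unbounded D hD hDd k 0
    refine ⟨j+1, ?_⟩
    rw [idx_succ, if_pos hj]
    omega
  | succ m ih =>
    obtain ⟨j, hj⟩ := ih
    obtain ⟨j', hj'1, hj'2⟩ := slot_none_unbounded D hD hDd k j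
    refine ⟨j'+1, ?_⟩
    have h1 : idx D hD hDd k j ≤ idx D hD hDd k j' := idx_mono D hD hDd hj'1
    rw [idx_succ, if_pos hj'2]
    omega

/-- position of the `m`-th bit slot in row `k`. -/
noncomputable def pos (k m : ℕ) : ℕ := Nat.find (idx_unbounded D hD hDd k m) - 1

lemma pos_spec (k m : ℕ) : slot D hD hDd k (pos D hD hDd k m) = none ∧
    idx D hD hDd k (pos D hD hDd k m) = m := by
  set J := Nat.find (idx_unbounded D hD hDd k m) with hJ
  have hfind : m < idx D hD hDd k J := Nat.find_spec (idx_unbounded D hD hDd k m)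
  have hJ0 : J ≠ 0 := by
    intro h
    rw [h] at hfind
    simp [idx] at hfind
  have hJp : J = pos D hD hDd k m + 1 := by unfold pos; omega
  have hmin : ¬ m < idx D hD hDd k (pos D hD hDd k m) :=
    Nat.find_min (idx_unbounded D hD hDd k m) (by omega)
  rw [hJp, idx_succ] at hfind
  by_cases hs : slot D hD hDd k (pos D hD hDd k m) = none
  · rw [if_pos hs] at hfind
    exact ⟨hs, by omega⟩
  · rw [if_neg hs] at hfind
    omega

lemma pos_ge (k m : ℕ) : m ≤ pos D hD hDd k m := by
  have h1 := (pos_spec D hD hDd k m).2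
  have h2 := idx_le D hD hDd k (pos D hD hDd k m)
  omega

/-- the reduction map. -/
noncomputable def gfun (x : X) : X := fun k j =>
  match slot D hD hDd k j with
  | some b => b
  | none => x k (idx D hD hDd k j)

lemma gfun_measurable : Measurable (gfun D hD hDd) := by
  refine measurable_pi_lambda _ (fun k => measurable_pi_lambda _ (fun j => ?_))
  match h : slot D hD hDd k j with
  | some b =>
    have : (fun x : X => gfun D hD hDd x k j) = fun _ => b := by
      funext x; unfold gfun; rw [h]
    rw [this]; exact measurable_const
  | none =>
    have : (fun x : X => gfun D hD hDd x k j) = fun x => x k (idx D hD hDd k j) := by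
      funext x; unfold gfun; rw [h]
    rw [this]
    exact (measurable_pi_apply _).comp (measurable_pi_apply k)

lemma gfun_mem_cyl (x : X) (n : ℕ) : gfun D hD hDd x ∈ cyl (stages D hD hDd n).1 := by
  intro k j b hb
  have hj : j < ((stages D hD hDd n).1 k).length := (List.getElem?_eq_some_iff.mp hb).1
  rw [slot_eq D hD hDd hj] at hb
  have : slot D hD hDd k j = some b := Option.some.inj hb
  unfold gfun; rw [this]

lemma gfun_slot_none {x : X} {k j : ℕ} (h : slot D hD hDd k j = none) :
    gfun D hD hDd x k j = x k (idx D hD hDd k j) := by unfold gfun; rw [h]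

lemma gfun_slot_some {x : X} {k j : ℕ} {b : Bool} (h : slot D hD hDd k j = some b) :
    gfun D hD hDd x k j = b := by unfold gfun; rw [h]

end Stages
end E0Naux

/-- For every comeager `C ⊆ (2^ℕ)^ℕ`, `E₀^ℕ` is Borel reducible to `E₀^ℕ ↾ C`. -/
theorem E0N_reducible_to_restriction (C : Set (ℕ → ℕ → Bool))
    (hC : C ∈ residual (ℕ → ℕ → Bool)) :
    ∃ g : (ℕ → ℕ → Bool) → (ℕ → ℕ → Bool), Measurable g ∧ (∀ x, g x ∈ C) ∧
      ∀ x y, E0N x y ↔ E0N (g x) (g y) := by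
  obtain ⟨S, hSo, hSd, hSc, hSs⟩ := mem_residual_iff.mp hC
  obtain ⟨f, hf⟩ := (hSc.insert Set.univ).exists_eq_range ⟨Set.univ, Set.mem_insert _ _⟩
  have hmem : ∀ n, f n ∈ insert Set.univ S := fun n => hf ▸ Set.mem_range_self n
  have hfo : ∀ n, IsOpen (f n) := by
    intro n
    rcases Set.mem_insert_iff.mp (hmem n) with h | h
    · rw [h]; exact isOpen_univ
    · exact hSo _ h
  have hfd : ∀ n, Dense (f n) := by
    intro n
    rcases Set.mem_insert_iff.mp (hmem n) with h | h
    · rw [h]; exact dense_univ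
    · exact hSd _ h
  refine ⟨E0Naux.gfun f hfo hfd, E0Naux.gfun_measurable f hfo hfd, ?_, ?_⟩
  · intro x
    apply hSs
    apply Set.mem_sInter.mpr
    intro s hs
    have hs' : s ∈ Set.range f := by rw [← hf]; exact Set.mem_insert_of_mem _ hs
    obtain ⟨n, rfl⟩ := hs'
    exact E0Naux.stages_cyl f hfo hfd n (E0Naux.gfun_mem_cyl f hfo hfd x (n+1))
  · intro x y
    constructor
    · intro h k
      obtain ⟨N, hN⟩ := h k
      refine ⟨E0Naux.pos f hfo hfd k N, fun j hj => ?_⟩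
      match hs : E0Naux.slot f hfo hfd k j with
      | some b =>
        rw [E0Naux.gfun_slot_some f hfo hfd hs, E0Naux.gfun_slot_some f hfo hfd hs]
      | none =>
        rw [E0Naux.gfun_slot_none f hfo hfd hs, E0Naux.gfun_slot_none f hfo hfd hs]
        apply hN
        have h1 := (E0Naux.pos_spec f hfo hfd k N).2
        have h2 := E0Naux.idx_mono f hfo hfd (k := k) hj
        omega
    · intro h k
      obtain ⟨P, hP⟩ := h k
      refine ⟨P, fun m hm => ?_⟩
      have hpos := E0Naux.pos_spec f hfo hfd k m
      have hge : P ≤ E0Naux.pos f hfo hfd k m := le_trans hm (E0Naux.pos_ge f hfo hfd k m)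
      have := hP (E0Naux.pos f hfo hfd k m) hge
      rw [E0Naux.gfun_slot_none f hfo hfd hpos.1, E0Naux.gfun_slot_none f hfo hfd hpos.1,
        hpos.2] at this
      exact this
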